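/- Suppose all entries of Γ are nonnegative, γ_k · (Σ_{j∈N} Γ_{kj}) < 1 with γ_k > 0 and n_{0,k} > 0 for every k ∈ N₂, and a_i > Σ_{j≠i, j∈N} Γ_{ij} with a_i > 0 for every i ∈ N₁. Suppose moreover T_i > S_k and b̃_i > b̂_k > 0 for all i ∈ N₁ and k ∈ N₂, where T_i = a_i + Σ_{j≠i,j∈N} Γ_{ij} and S_k = 2 − 2γ_kΓ_{kk}. Let u = Γ̄⁻¹ b̄ and let κ = ‖Γ̄‖_∞ · ‖Γ̄⁻¹‖_∞ be the condition number of Γ̄. Then (max_{k∈N₂} γ_k n_{0,k}) / (2 · max_{i∈N₁} a_i) ≤ ‖u‖_∞ ≤ κ · max_{i∈N₁} β_i/α_i. -/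

import Mathlib

open Matrix Finset Filter Topology

section Defs

variable {m n : ℕ}

/-- Γ̃ ∈ ℝ^{m×N}: rows of the game players. Γ̃_{ii} = a_i, Γ̃_{ij} = Γ_{ij} for j ≠ i. -/
def GammaTilde (Γ : Matrix (Fin m ⊕ Fin n) (Fin m ⊕ Fin n) ℝ) (a : Fin m → ℝ) :
    Matrix (Fin m) (Fin m ⊕ Fin n) ℝ :=
  Matrix.of fun i j => if j = Sum.inl i then a i else Γ (Sum.inl i) j

/-- Γ̂ ∈ ℝ^{n×N}: rows of the target seekers. Γ̂_{kk} = 1 - γ_kΓ_{kk}, Γ̂_{kj} = -γ_kΓ_{kj}. -/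
def GammaHat (Γ : Matrix (Fin m ⊕ Fin n) (Fin m ⊕ Fin n) ℝ) (γ : Fin n → ℝ) :
    Matrix (Fin n) (Fin m ⊕ Fin n) ℝ :=
  Matrix.of fun k j =>
    if j = Sum.inr k then 1 - γ k * Γ (Sum.inr k) (Sum.inr k) else -(γ k * Γ (Sum.inr k) j)

/-- Γ̄ ∈ ℝ^{N×N}: Γ̃ stacked above Γ̂. -/
def GammaBar (Γ : Matrix (Fin m ⊕ Fin n) (Fin m ⊕ Fin n) ℝ) (a : Fin m → ℝ) (γ : Fin n → ℝ) :
    Matrix (Fin m ⊕ Fin n) (Fin m ⊕ Fin n) ℝ :=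
  Matrix.fromRows (GammaTilde Γ a) (GammaHat Γ γ)

/-- b̃ ∈ ℝ^m: b̃_i = a_iβ_i/α_i - n_{0,i}. -/
noncomputable def bTilde (n0 : Fin m ⊕ Fin n → ℝ) (α β a : Fin m → ℝ) : Fin m → ℝ :=
  fun i => a i * β i / α i - n0 (Sum.inl i)

/-- b̂ ∈ ℝ^n: b̂_k = γ_k n_{0,k}. -/
def bHat (n0 : Fin m ⊕ Fin n → ℝ) (γ : Fin n → ℝ) : Fin n → ℝ :=
  fun k => γ k * n0 (Sum.inr k)

/-- b̄ ∈ ℝ^N: b̃ stacked above b̂. -/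
noncomputable def bBar (n0 : Fin m ⊕ Fin n → ℝ) (α β a : Fin m → ℝ) (γ : Fin n → ℝ) : Fin m ⊕ Fin n → ℝ :=
  Sum.elim (bTilde n0 α β a) (bHat n0 γ)

/-- max norm of a vector -/
noncomputable def vecNormInf {ι : Type*} [Fintype ι] (v : ι → ℝ) : ℝ := ⨆ i, |v i|

/-- induced ∞-norm of a matrix: max absolute row sum -/
noncomputable def matNormInf {ι κ : Type*} [Fintype ι] [Fintype κ] (A : Matrix ι κ ℝ) : ℝ :=
  ⨆ i, ∑ j, |A i j|

/-- iteration map of the distributed algorithm -/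
noncomputable def iterMap (Γ : Matrix (Fin m ⊕ Fin n) (Fin m ⊕ Fin n) ℝ)
    (n0 : Fin m ⊕ Fin n → ℝ) (α β a : Fin m → ℝ) (γ : Fin n → ℝ) :
    (Fin m ⊕ Fin n → ℝ) → (Fin m ⊕ Fin n → ℝ) := fun u =>
  Sum.elim
    (fun i => β i / α i -
      (1 / a i) * (n0 (Sum.inl i) + ∑ j ∈ univ.erase (Sum.inl i), Γ (Sum.inl i) j * u j))
    (fun k => (γ k / (1 - γ k * Γ (Sum.inr k) (Sum.inr k))) *
      (n0 (Sum.inr k) + ∑ j ∈ univ.erase (Sum.inr k), Γ (Sum.inr k) j * u j))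

end Defs


section Aux

variable {ι κ : Type*} [Fintype ι] [Fintype κ]

lemma abs_le_vecNormInf (v : ι → ℝ) (i : ι) : |v i| ≤ vecNormInf v := by
  rw [vecNormInf]; exact le_ciSup (Set.finite_range fun i => |v i|).bddAbove i

lemma vecNormInf_nonneg [Nonempty ι] (v : ι → ℝ) : 0 ≤ vecNormInf v :=
  (abs_nonneg _).trans (abs_le_vecNormInf v (Classical.arbitrary ι))

lemma rowSum_le_matNormInf (A : Matrix ι κ ℝ) (i : ι) :
    ∑ j, |A i j| ≤ matNormInf A := by
  rw [matNormInf]; exact le_ciSup (Set.finite_range fun i => ∑ j, |A i j|).bddAbove i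

lemma matNormInf_nonneg [Nonempty ι] (A : Matrix ι κ ℝ) : 0 ≤ matNormInf A :=
  (Finset.sum_nonneg fun j _ => abs_nonneg _).trans
    (rowSum_le_matNormInf A (Classical.arbitrary ι))

lemma abs_mulVec_le (A : Matrix ι κ ℝ) (v : κ → ℝ) (i : ι) :
    |A.mulVec v i| ≤ (∑ j, |A i j|) * vecNormInf v := by
  rw [Matrix.mulVec, dotProduct, Finset.sum_mul]
  refine (Finset.abs_sum_le_sum_abs _ _).trans (Finset.sum_le_sum fun j _ => ?_)
  rw [abs_mul]
  exact mul_le_mul_of_nonneg_left (abs_le_vecNormInf v j) (abs_nonneg _)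

lemma vecNormInf_mulVec_le [Nonempty ι] [Nonempty κ] (A : Matrix ι κ ℝ) (v : κ → ℝ) :
    vecNormInf (A.mulVec v) ≤ matNormInf A * vecNormInf v := by
  refine ciSup_le fun i => (abs_mulVec_le A v i).trans ?_
  exact mul_le_mul_of_nonneg_right (rowSum_le_matNormInf A i) (vecNormInf_nonneg v)

end Aux

/-- bounds on the maximum allocated power, u = Γ̄⁻¹b̄ :
(max_{k∈N₂} γ_k n_{0,k}) / (2 max_{i∈N₁} a_i) ≤ ‖u‖_∞ ≤ κ · max_{i∈N₁} β_i/α_i. -/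
theorem statement5 (m n : ℕ) (hm : 0 < m) (hn : 0 < n)
    (Γ : Matrix (Fin m ⊕ Fin n) (Fin m ⊕ Fin n) ℝ) (hΓ : ∀ i j, 0 ≤ Γ i j)
    (n0 : Fin m ⊕ Fin n → ℝ) (hn0 : ∀ i, 0 < n0 i)
    (α β a : Fin m → ℝ) (γ : Fin n → ℝ)
    (hαpos : ∀ i, 0 < α i) (hβpos : ∀ i, 0 < β i) (hapos : ∀ i, 0 < a i)
    (hγpos : ∀ k, 0 < γ k)
    (hγ : ∀ k : Fin n, γ k * ∑ j, Γ (Sum.inr k) j < 1)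
    (ha : ∀ i : Fin m, ∑ j ∈ univ.erase (Sum.inl i), Γ (Sum.inl i) j < a i)
    (hTS : ∀ (i : Fin m) (k : Fin n),
      2 - 2 * γ k * Γ (Sum.inr k) (Sum.inr k) <
        a i + ∑ j ∈ univ.erase (Sum.inl i), Γ (Sum.inl i) j)
    (hb : ∀ (i : Fin m) (k : Fin n),
      bHat n0 γ k < bTilde n0 α β a i ∧ 0 < bHat n0 γ k) :
    (⨆ k : Fin n, γ k * n0 (Sum.inr k)) / (2 * ⨆ i : Fin m, a i) ≤
      vecNormInf ((GammaBar Γ a γ)⁻¹.mulVec (bBar n0 α β a γ)) ∧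
    vecNormInf ((GammaBar Γ a γ)⁻¹.mulVec (bBar n0 α β a γ)) ≤
      (matNormInf (GammaBar Γ a γ) * matNormInf (GammaBar Γ a γ)⁻¹) *
        ⨆ i : Fin m, β i / α i := by
  haveI : Nonempty (Fin m) := Fin.pos_iff_nonempty.mp hm
  haveI : Nonempty (Fin n) := Fin.pos_iff_nonempty.mp hn
  set A := GammaBar Γ a γ with hA
  set b := bBar n0 α β a γ with hbb
  set u := A⁻¹.mulVec b with hu
  obtain ⟨i₀⟩ := (inferInstance : Nonempty (Fin m))
  obtain ⟨k₀⟩ := (inferInstance : Nonempty (Fin n))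
  -- row sums
  have rowA : ∀ i : Fin m, ∑ j, |A (Sum.inl i) j|
      = a i + ∑ j ∈ univ.erase (Sum.inl i), Γ (Sum.inl i) j := by
    intro i
    rw [← Finset.add_sum_erase _ _ (Finset.mem_univ (Sum.inl i))]
    congr 1
    · simp [hA, GammaBar, GammaTilde, Matrix.fromRows_apply_inl, Matrix.fromRows_apply_inr, abs_of_pos (hapos i)]
    · refine Finset.sum_congr rfl fun j hj => ?_
      have hji : j ≠ Sum.inl i := (Finset.mem_erase.mp hj).1
      simp [hA, GammaBar, GammaTilde, Matrix.fromRows_apply_inl, Matrix.fromRows_apply_inr, hji, abs_of_nonneg (hΓ _ _)]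
  have hsplitγ : ∀ k : Fin n,
      γ k * Γ (Sum.inr k) (Sum.inr k)
        + γ k * ∑ j ∈ univ.erase (Sum.inr k), Γ (Sum.inr k) j < 1 := by
    intro k
    have h := hγ k
    rw [← Finset.add_sum_erase _ _ (Finset.mem_univ (Sum.inr k)), mul_add] at h
    exact h
  have hγsum_nonneg : ∀ k : Fin n,
      0 ≤ γ k * ∑ j ∈ univ.erase (Sum.inr k), Γ (Sum.inr k) j := fun k =>
    mul_nonneg (hγpos k).le (Finset.sum_nonneg fun j _ => hΓ _ _)
  have hdiagpos : ∀ k : Fin n, 0 < 1 - γ k * Γ (Sum.inr k) (Sum.inr k) := by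
    intro k; have := hsplitγ k; have := hγsum_nonneg k; linarith
  have rowB : ∀ k : Fin n, ∑ j, |A (Sum.inr k) j|
      = (1 - γ k * Γ (Sum.inr k) (Sum.inr k))
        + γ k * ∑ j ∈ univ.erase (Sum.inr k), Γ (Sum.inr k) j := by
    intro k
    rw [← Finset.add_sum_erase _ _ (Finset.mem_univ (Sum.inr k))]
    congr 1
    · simp [hA, GammaBar, GammaHat, Matrix.fromRows_apply_inl, Matrix.fromRows_apply_inr, abs_of_pos (hdiagpos k)]
    · rw [Finset.mul_sum]
      refine Finset.sum_congr rfl fun j hj => ?_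
      have hji : j ≠ Sum.inr k := (Finset.mem_erase.mp hj).1
      simp [hA, GammaBar, GammaHat, Matrix.fromRows_apply_inl, Matrix.fromRows_apply_inr, hji, abs_of_nonneg,
        abs_of_nonneg (mul_nonneg (hγpos k).le (hΓ _ _))]
  -- strict diagonal dominance ⇒ invertible
  have hdet : A.det ≠ 0 := by
    apply det_ne_zero_of_sum_row_lt_diag
    rintro (i | k)
    · simp only [Real.norm_eq_abs]
      have h1 : ∑ j ∈ univ.erase (Sum.inl i), |A (Sum.inl i) j|
          = ∑ j ∈ univ.erase (Sum.inl i), Γ (Sum.inl i) j := by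
        refine Finset.sum_congr rfl fun j hj => ?_
        have hji : j ≠ Sum.inl i := (Finset.mem_erase.mp hj).1
        simp [hA, GammaBar, GammaTilde, Matrix.fromRows_apply_inl, Matrix.fromRows_apply_inr, hji, abs_of_nonneg (hΓ _ _)]
      have h2 : |A (Sum.inl i) (Sum.inl i)| = a i := by
        simp [hA, GammaBar, GammaTilde, Matrix.fromRows_apply_inl, Matrix.fromRows_apply_inr, abs_of_pos (hapos i)]
      rw [h1, h2]; exact ha i
    · simp only [Real.norm_eq_abs]
      have h1 : ∑ j ∈ univ.erase (Sum.inr k), |A (Sum.inr k) j|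
          = γ k * ∑ j ∈ univ.erase (Sum.inr k), Γ (Sum.inr k) j := by
        rw [Finset.mul_sum]
        refine Finset.sum_congr rfl fun j hj => ?_
        have hji : j ≠ Sum.inr k := (Finset.mem_erase.mp hj).1
        simp [hA, GammaBar, GammaHat, Matrix.fromRows_apply_inl, Matrix.fromRows_apply_inr, hji,
          abs_of_nonneg (mul_nonneg (hγpos k).le (hΓ _ _))]
      have h2 : |A (Sum.inr k) (Sum.inr k)| = 1 - γ k * Γ (Sum.inr k) (Sum.inr k) := by
        simp [hA, GammaBar, GammaHat, Matrix.fromRows_apply_inl, Matrix.fromRows_apply_inr, abs_of_pos (hdiagpos k)]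
      rw [h1, h2]
      have := hsplitγ k; linarith
  have hAu : A.mulVec u = b := by
    rw [hu, Matrix.mulVec_mulVec, Matrix.mul_nonsing_inv _ (isUnit_iff_ne_zero.mpr hdet),
      Matrix.one_mulVec]
  have hu_nonneg : 0 ≤ vecNormInf u := vecNormInf_nonneg u
  -- sup of a
  have hbdda : BddAbove (Set.range a) := (Set.finite_range a).bddAbove
  have hsupa : ∀ i, a i ≤ ⨆ i, a i := fun i => le_ciSup hbdda i
  have hsupa_pos : 0 < ⨆ i, a i := lt_of_lt_of_le (hapos i₀) (hsupa i₀)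
  constructor
  · -- lower bound
    rw [div_le_iff₀ (by linarith)]
    refine ciSup_le fun k => ?_
    have hval : γ k * n0 (Sum.inr k) = A.mulVec u (Sum.inr k) := by
      rw [hAu]; simp [hbb, bBar, bHat]
    have h1 : γ k * n0 (Sum.inr k) ≤ (∑ j, |A (Sum.inr k) j|) * vecNormInf u := by
      rw [hval]
      exact (le_abs_self _).trans (abs_mulVec_le A u (Sum.inr k))
    have h2 : ∑ j, |A (Sum.inr k) j| ≤ 2 * ⨆ i, a i := by
      rw [rowB k]
      have hts := hTS i₀ k
      have hai := ha i₀
      have := hsplitγ k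
      have := hsupa i₀
      linarith
    calc γ k * n0 (Sum.inr k) ≤ (∑ j, |A (Sum.inr k) j|) * vecNormInf u := h1
      _ ≤ (2 * ⨆ i, a i) * vecNormInf u := mul_le_mul_of_nonneg_right h2 hu_nonneg
      _ = vecNormInf u * (2 * ⨆ i, a i) := mul_comm _ _
  · -- upper bound
    have hbddβα : BddAbove (Set.range fun i => β i / α i) :=
      (Set.finite_range _).bddAbove
    have hsupβα_nn : 0 ≤ ⨆ i, β i / α i :=
      le_trans (div_nonneg (hβpos i₀).le (hαpos i₀).le) (le_ciSup hbddβα i₀)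
    have hAnn : 0 ≤ matNormInf A := matNormInf_nonneg A
    have key : ∀ i : Fin m, bTilde n0 α β a i ≤ matNormInf A * ⨆ i, β i / α i := by
      intro i
      have h1 : bTilde n0 α β a i ≤ a i * (β i / α i) := by
        have := hn0 (Sum.inl i)
        simp only [bTilde]
        rw [mul_div_assoc]
        linarith
      have h2 : a i ≤ matNormInf A := by
        refine le_trans ?_ (rowSum_le_matNormInf A (Sum.inl i))
        rw [rowA i]
        have : 0 ≤ ∑ j ∈ univ.erase (Sum.inl i), Γ (Sum.inl i) j :=
          Finset.sum_nonneg fun j _ => hΓ _ _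
        linarith
      calc bTilde n0 α β a i ≤ a i * (β i / α i) := h1
        _ ≤ matNormInf A * (β i / α i) :=
          mul_le_mul_of_nonneg_right h2 (div_nonneg (hβpos i).le (hαpos i).le)
        _ ≤ matNormInf A * ⨆ i, β i / α i :=
          mul_le_mul_of_nonneg_left (le_ciSup hbddβα i) hAnn
    have hbnorm : vecNormInf b ≤ matNormInf A * ⨆ i, β i / α i := by
      refine ciSup_le ?_
      rintro (i | k)
      · have hpos : 0 < bTilde n0 α β a i := lt_trans (hb i k₀).2 (hb i k₀).1
        have : b (Sum.inl i) = bTilde n0 α β a i := rfl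
        rw [this, abs_of_pos hpos]
        exact key i
      · have : b (Sum.inr k) = bHat n0 γ k := rfl
        rw [this, abs_of_pos (hb i₀ k).2]
        exact le_trans (hb i₀ k).1.le (key i₀)
    calc vecNormInf u ≤ matNormInf A⁻¹ * vecNormInf b := vecNormInf_mulVec_le _ _
      _ ≤ matNormInf A⁻¹ * (matNormInf A * ⨆ i, β i / α i) :=
        mul_le_mul_of_nonneg_left hbnorm (matNormInf_nonneg _)
      _ = (matNormInf A * matNormInf A⁻¹) * ⨆ i, β i / α i := by ring
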